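/- Let a, b > 0 be real numbers and let m, n ≥ 1 be natural numbers. Then for every natural number t with 0 ≤ t ≤ m + n, the coefficient of z^t in the real polynomial (1 + a·z)^m · (1 + b·z)^n is at most the coefficient of z^t in (1 + ((a·m + b·n)/(m + n))·z)^{m+n}; equivalently, ∑_{x=0}^{t} C(m, x)·C(n, t−x)·a^x·b^{t−x} ≤ C(m+n, t)·((a·m + b·n)/(m + n))^t. -/

import Mathlib

open Polynomial

private lemma coeff_one_add_mul_X_pow (a : ℝ) (m k : ℕ) :
    ((1 + C a * X) ^ m).coeff k = (m.choose k : ℝ) * a ^ k := by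
  rw [add_comm, add_pow, finset_sum_coeff]
  have hterm : ∀ b, ((C a * X) ^ b * 1 ^ (m - b) * (m.choose b : ℝ[X])).coeff k
      = if k = b then (m.choose b : ℝ) * a ^ b else 0 := by
    intro b
    rw [one_pow, mul_one, mul_pow, ← C_pow, ← C_eq_natCast, mul_right_comm, ← C_mul,
      coeff_C_mul, coeff_X_pow]
    by_cases h : k = b <;> simp [h, mul_comm]
  rw [Finset.sum_congr rfl fun b _ => hterm b, Finset.sum_ite_eq (Finset.range (m + 1)) k]
  by_cases h : k ≤ m
  · simp [Finset.mem_range, Nat.lt_succ_of_le h]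
  · push_neg at h
    simp [Finset.mem_range, Nat.choose_eq_zero_of_lt h, (by omega : ¬ k < m + 1)]

private lemma coeff_mul_mono {P Q R : ℝ[X]} (hR : ∀ k, 0 ≤ R.coeff k)
    (hPQ : ∀ k, P.coeff k ≤ Q.coeff k) (k : ℕ) : (P * R).coeff k ≤ (Q * R).coeff k := by
  rw [coeff_mul, coeff_mul]
  exact Finset.sum_le_sum fun ij _ => mul_le_mul_of_nonneg_right (hPQ ij.1) (hR ij.2)

private lemma core_ineq (a b : ℝ) (ha : 0 < a) (hb : 0 < b) (m k : ℕ) :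
    (m.choose (k + 1) : ℝ) * a ^ (k + 1) + (m.choose k : ℝ) * a ^ k * b
      ≤ ((m + 1).choose (k + 1) : ℝ) * ((a * m + b) / (m + 1)) ^ (k + 1) := by
  by_cases hk : k ≤ m
  · set c : ℝ := (a * m + b) / (m + 1) with hc
    have hm1 : (0 : ℝ) < (m : ℝ) + 1 := by positivity
    set x : ℝ := (b - a) / (((m : ℝ) + 1) * a) with hx
    have hax : a * (1 + x) = c := by
      rw [hx, hc]; field_simp; ring
    have hb2 : (-2 : ℝ) ≤ x := by
      rw [hx, le_div_iff₀ (by positivity)]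
      nlinarith [mul_nonneg (Nat.cast_nonneg m : (0:ℝ) ≤ m) ha.le]
    have hbern : 1 + ((k:ℝ) + 1) * x ≤ (1 + x) ^ (k + 1) := by
      have := one_add_mul_le_pow hb2 (k + 1)
      push_cast at this ⊢; linarith
    have hkey : a ^ (k + 1) * (1 + ((k:ℝ) + 1) * x) ≤ c ^ (k + 1) := by
      calc a ^ (k + 1) * (1 + ((k:ℝ) + 1) * x) ≤ a ^ (k + 1) * (1 + x) ^ (k + 1) :=
            mul_le_mul_of_nonneg_left hbern (by positivity)
        _ = (a * (1 + x)) ^ (k + 1) := by rw [mul_pow]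
        _ = c ^ (k + 1) := by rw [hax]
    have hch1 : ((m.choose (k + 1) : ℝ)) * ((m : ℝ) + 1)
        = ((m + 1).choose (k + 1) : ℝ) * ((m : ℝ) - k) := by
      have h := Nat.choose_mul_succ_eq m (k + 1)
      have h2 : (m + 1 - (k + 1)) = m - k := by omega
      rw [h2] at h
      have h3 := congrArg (fun z : ℕ => (z : ℝ)) h
      push_cast [Nat.cast_sub hk] at h3
      linarith
    have hch2 : ((m : ℝ) + 1) * (m.choose k : ℝ) = ((m + 1).choose (k + 1) : ℝ) * ((k : ℝ) + 1) := by
      have h := Nat.add_one_mul_choose_eq m k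
      have h3 := congrArg (fun z : ℕ => (z : ℝ)) h
      push_cast at h3
      linarith
    have hC : (0 : ℝ) ≤ ((m + 1).choose (k + 1) : ℝ) := by positivity
    have hmain : ((m + 1).choose (k + 1) : ℝ) * (a ^ (k + 1) * (1 + ((k:ℝ) + 1) * x))
        ≤ ((m + 1).choose (k + 1) : ℝ) * c ^ (k + 1) :=
      mul_le_mul_of_nonneg_left hkey hC
    have heq : ((m + 1).choose (k + 1) : ℝ) * (a ^ (k + 1) * (1 + ((k:ℝ) + 1) * x))
        = (m.choose (k + 1) : ℝ) * a ^ (k + 1) + (m.choose k : ℝ) * a ^ k * b := by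
      have ha' : a ≠ 0 := ne_of_gt ha
      have hm' : ((m : ℝ) + 1) ≠ 0 := ne_of_gt hm1
      rw [hx]
      field_simp
      linear_combination (-(a^(k+1)*a)) * hch1 + (-(a^(k+1)*b)) * hch2
    linarith
  · push_neg at hk
    have h1 : m.choose (k + 1) = 0 := Nat.choose_eq_zero_of_lt (by omega)
    have h2 : m.choose k = 0 := Nat.choose_eq_zero_of_lt hk
    have h3 : (m + 1).choose (k + 1) = 0 := Nat.choose_eq_zero_of_lt (by omega)
    simp [h1, h2, h3]

private lemma baseP (a b : ℝ) (ha : 0 < a) (hb : 0 < b) (m : ℕ) (k : ℕ) :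
    ((1 + C a * X) ^ m * (1 + C b * X)).coeff k
      ≤ ((1 + C ((a * m + b) / (m + 1)) * X) ^ (m + 1)).coeff k := by
  cases k with
  | zero =>
      simp [mul_coeff_zero, coeff_one_add_mul_X_pow]
  | succ k =>
      have hsplit : ((1 + C a * X) ^ m * (1 + C b * X)).coeff (k + 1)
          = (m.choose (k + 1) : ℝ) * a ^ (k + 1) + (m.choose k : ℝ) * a ^ k * b := by
        rw [mul_add, mul_one, ← mul_assoc, coeff_add, coeff_mul_X, coeff_mul_C,
          coeff_one_add_mul_X_pow, coeff_one_add_mul_X_pow]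
      rw [hsplit, coeff_one_add_mul_X_pow]
      exact core_ineq a b ha hb m k

private lemma coeff_le_avg (a b : ℝ) (ha : 0 < a) (hb : 0 < b) (m : ℕ) (hm : 1 ≤ m) :
    ∀ n k, ((1 + C a * X) ^ m * (1 + C b * X) ^ n).coeff k
      ≤ ((1 + C ((a * m + b * n) / ((m : ℝ) + n)) * X) ^ (m + n)).coeff k := by
  have hm' : (1 : ℝ) ≤ (m : ℝ) := by exact_mod_cast hm
  intro n
  induction n with
  | zero =>
      intro k
      have hcm : (a * m + b * (0:ℕ)) / ((m : ℝ) + (0:ℕ)) = a := by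
        push_cast
        field_simp
        ring
      rw [hcm]
      simp
  | succ n ih =>
      intro k
      have hmn : (0 : ℝ) < (m : ℝ) + n := by
        have : (0:ℝ) ≤ (n:ℝ) := Nat.cast_nonneg n
        linarith
      set cn : ℝ := (a * m + b * n) / ((m : ℝ) + n) with hcn
      have hcnpos : 0 < cn := by
        apply div_pos _ hmn
        have h1 : (0:ℝ) < a * m := by nlinarith
        have h2 : (0:ℝ) ≤ b * n := by positivity
        linarith
      have hQnn : ∀ j, (0:ℝ) ≤ (1 + C b * X).coeff j := by
        intro j
        have := coeff_one_add_mul_X_pow b 1 j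
        rw [pow_one] at this
        rw [this]
        positivity
      have step1 : ((1 + C a * X) ^ m * (1 + C b * X) ^ (n + 1)).coeff k
          = (((1 + C a * X) ^ m * (1 + C b * X) ^ n) * (1 + C b * X)).coeff k := by
        rw [pow_succ, ← mul_assoc]
      have step2 : (((1 + C a * X) ^ m * (1 + C b * X) ^ n) * (1 + C b * X)).coeff k
          ≤ ((1 + C cn * X) ^ (m + n) * (1 + C b * X)).coeff k :=
        coeff_mul_mono hQnn ih k
      have step3 := baseP cn b hcnpos hb (m + n) k
      have hceq2 : (cn * ((m + n : ℕ) : ℝ) + b) / (((m + n : ℕ) : ℝ) + 1)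
          = (a * m + b * ((n + 1 : ℕ) : ℝ)) / ((m : ℝ) + ((n + 1 : ℕ) : ℝ)) := by
        have h1 : cn * ((m + n : ℕ) : ℝ) = a * m + b * n := by
          rw [hcn]
          push_cast
          field_simp
        rw [h1]
        push_cast
        ring_nf
      rw [step1]
      refine le_trans step2 (le_trans step3 (le_of_eq ?_))
      show ((1 + C ((cn * ((m + n : ℕ) : ℝ) + b) / (((m + n : ℕ) : ℝ) + 1)) * X) ^ (m + n + 1)).coeff k = _
      rw [hceq2, Nat.add_assoc]

/-- Lemma `coef` of the paper: for `a, b > 0` and `m, n ≥ 1`, each coefficient of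
`(1 + a·z)^m (1 + b·z)^n` is dominated by the corresponding coefficient of
`(1 + ((a·m + b·n)/(m + n))·z)^{m+n}`. -/
theorem coeff_prod_le_coeff_avg (a b : ℝ) (ha : 0 < a) (hb : 0 < b)
    (m n : ℕ) (hm : 1 ≤ m) (hn : 1 ≤ n) (t : ℕ) (ht : t ≤ m + n) :
    ∑ x ∈ Finset.range (t + 1),
        (m.choose x : ℝ) * (n.choose (t - x) : ℝ) * a ^ x * b ^ (t - x)
      ≤ ((m + n).choose t : ℝ) * ((a * m + b * n) / ((m : ℝ) + n)) ^ t := by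
  have hL : ((1 + C a * X) ^ m * (1 + C b * X) ^ n).coeff t
      = ∑ x ∈ Finset.range (t + 1),
          (m.choose x : ℝ) * (n.choose (t - x) : ℝ) * a ^ x * b ^ (t - x) := by
    rw [coeff_mul, Finset.Nat.sum_antidiagonal_eq_sum_range_succ_mk]
    refine Finset.sum_congr rfl fun x _ => ?_
    rw [coeff_one_add_mul_X_pow, coeff_one_add_mul_X_pow]
    ring
  have hR : ((1 + C ((a * m + b * n) / ((m : ℝ) + n)) * X) ^ (m + n)).coeff t
      = ((m + n).choose t : ℝ) * ((a * m + b * n) / ((m : ℝ) + n)) ^ t :=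
    coeff_one_add_mul_X_pow _ (m + n) t
  rw [← hL, ← hR]
  exact coeff_le_avg a b ha hb m hm n t
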